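/- Let n and ℓ be positive integers, and let π_ℂ : ℂ^{n×ℓ} → ℂ^{n×ℓ} (respectively π : ℝ^{n×ℓ} → ℝ^{n×ℓ}) denote column-centering: π_ℂ([a₁ … a_ℓ]) = [a₁−ā, …, a_ℓ−ā] with ā = (a₁+⋯+a_ℓ)/ℓ. Then for all A, B ∈ ℂ^{n×ℓ}: d_{F(n)}(A,B) = d_{U(n)}(π_ℂ(A), π_ℂ(B)), and for all A, B ∈ ℝ^{n×ℓ}: d_{E(n)}(A,B) = d_{O(n)}(π(A), π(B)). -/

import Mathlib

open Matrix
open scoped ComplexOrder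

/-- Frobenius norm of a real matrix: `‖A‖ = √(trace (A Aᵀ))`. -/
noncomputable def frobR {n l : ℕ} (A : Matrix (Fin n) (Fin l) ℝ) : ℝ :=
  Real.sqrt (Matrix.trace (A * Aᵀ))

/-- Frobenius norm of a complex matrix: `‖A‖ = √(trace (A Aᴴ))`. -/
noncomputable def frobC {n l : ℕ} (A : Matrix (Fin n) (Fin l) ℂ) : ℝ :=
  Real.sqrt (Matrix.trace (A * Aᴴ)).re

open Classical in
/-- The unique positive semidefinite square root of a positive semidefinite real
symmetric matrix (junk value `0` if `M` is not positive semidefinite). -/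
noncomputable def matSqrtR {k : ℕ} (M : Matrix (Fin k) (Fin k) ℝ) : Matrix (Fin k) (Fin k) ℝ :=
  if h : M.PosSemidef then
    (h.1.eigenvectorUnitary : Matrix (Fin k) (Fin k) ℝ) *
      diagonal ((↑) ∘ Real.sqrt ∘ h.1.eigenvalues) *
      (star h.1.eigenvectorUnitary : Matrix (Fin k) (Fin k) ℝ)
  else 0

open Classical in
/-- The unique positive semidefinite square root of a positive semidefinite hermitian
matrix (junk value `0` if `M` is not positive semidefinite). -/
noncomputable def matSqrtC {k : ℕ} (M : Matrix (Fin k) (Fin k) ℂ) : Matrix (Fin k) (Fin k) ℂ :=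
  if h : M.PosSemidef then
    (h.1.eigenvectorUnitary : Matrix (Fin k) (Fin k) ℂ) *
      diagonal ((↑) ∘ Real.sqrt ∘ h.1.eigenvalues) *
      (star h.1.eigenvectorUnitary : Matrix (Fin k) (Fin k) ℂ)
  else 0

/-- Orbit distance for the orthogonal group `O(n)` acting by left multiplication. -/
noncomputable def dO {n l : ℕ} (A B : Matrix (Fin n) (Fin l) ℝ) : ℝ :=
  sInf {x | ∃ W ∈ Matrix.orthogonalGroup (Fin n) ℝ, x = frobR (W * A - B)}

/-- Orbit distance for the unitary group `U(n)` acting by left multiplication. -/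
noncomputable def dU {n l : ℕ} (A B : Matrix (Fin n) (Fin l) ℂ) : ℝ :=
  sInf {x | ∃ W ∈ Matrix.unitaryGroup (Fin n) ℂ, x = frobC (W * A - B)}

/-- `q𝟙ᵀ` : the `n × l` matrix each of whose columns equals `q` (real case). -/
def colMatR {n l : ℕ} (q : Fin n → ℝ) : Matrix (Fin n) (Fin l) ℝ :=
  Matrix.of fun i _ => q i

/-- `q𝟙ᵀ` : the `n × l` matrix each of whose columns equals `q` (complex case). -/
def colMatC {n l : ℕ} (q : Fin n → ℂ) : Matrix (Fin n) (Fin l) ℂ :=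
  Matrix.of fun i _ => q i

/-- Orbit distance for the euclidean group `E(n) = O(n) ⋉ ℝⁿ` acting columnwise. -/
noncomputable def dE {n l : ℕ} (A B : Matrix (Fin n) (Fin l) ℝ) : ℝ :=
  sInf {x | ∃ P ∈ Matrix.orthogonalGroup (Fin n) ℝ, ∃ q : Fin n → ℝ,
    x = frobR (P * A + colMatR q - B)}

/-- Orbit distance for the complex euclidean group `F(n) = U(n) ⋉ ℂⁿ` acting columnwise. -/
noncomputable def dF {n l : ℕ} (A B : Matrix (Fin n) (Fin l) ℂ) : ℝ :=
  sInf {x | ∃ P ∈ Matrix.unitaryGroup (Fin n) ℂ, ∃ q : Fin n → ℂ,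
    x = frobC (P * A + colMatC q - B)}

/-- Column-centering `π` : subtract from each column the average of all columns (real case). -/
noncomputable def centerR {n l : ℕ} (A : Matrix (Fin n) (Fin l) ℝ) : Matrix (Fin n) (Fin l) ℝ :=
  Matrix.of fun i j => A i j - (∑ k, A i k) / (l : ℝ)

/-- Column-centering `π_ℂ` : subtract from each column the average of all columns (complex case). -/
noncomputable def centerC {n l : ℕ} (A : Matrix (Fin n) (Fin l) ℂ) : Matrix (Fin n) (Fin l) ℂ :=
  Matrix.of fun i j => A i j - (∑ k, A i k) / (l : ℂ)


variable {n l : ℕ}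

lemma traceR (A : Matrix (Fin n) (Fin l) ℝ) :
    Matrix.trace (A * Aᵀ) = ∑ i, ∑ j, (A i j)^2 := by
  simp [Matrix.trace, Matrix.diag, Matrix.mul_apply, sq]

lemma traceC (A : Matrix (Fin n) (Fin l) ℂ) :
    (Matrix.trace (A * Aᴴ)).re = ∑ i, ∑ j, Complex.normSq (A i j) := by
  simp [Matrix.trace, Matrix.diag, Matrix.mul_apply, Matrix.conjTranspose_apply,
    Complex.mul_conj, Complex.re_sum]

lemma centerR_eq (A : Matrix (Fin n) (Fin l) ℝ) :
    centerR A = A - colMatR (fun i => (∑ k, A i k) / (l:ℝ)) := by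
  ext i j; simp [centerR, colMatR]

lemma centerC_eq (A : Matrix (Fin n) (Fin l) ℂ) :
    centerC A = A - colMatC (fun i => (∑ k, A i k) / (l:ℂ)) := by
  ext i j; simp [centerC, colMatC]

lemma row_aux_R (hl : 0 < l) (f : Fin l → ℝ) :
    ∑ j, (f j - (∑ k, f k) / (l:ℝ))^2 ≤ ∑ j, (f j)^2 := by
  have hl' : (l:ℝ) ≠ 0 := Nat.cast_ne_zero.mpr hl.ne'
  set c : ℝ := (∑ k, f k) / (l:ℝ) with hc
  have hS : ∑ k, f k = (l:ℝ) * c := by rw [hc]; field_simp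
  have e : ∀ j : Fin l, (f j - c)^2 = (f j)^2 - 2*c*(f j) + c^2 := fun j => by ring
  calc ∑ j, (f j - c)^2 = ∑ j, ((f j)^2 - 2*c*(f j) + c^2) := by simp_rw [e]
    _ = (∑ j, (f j)^2) - 2*c*(∑ j, f j) + (l:ℝ)*c^2 := by
        rw [Finset.sum_add_distrib, Finset.sum_sub_distrib, ← Finset.mul_sum,
          Finset.sum_const, Finset.card_univ, Fintype.card_fin, nsmul_eq_mul]
    _ ≤ ∑ j, (f j)^2 := by
        rw [hS]
        have : 0 ≤ (l:ℝ) * c^2 := by positivity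
        nlinarith

lemma row_aux_C (hl : 0 < l) (f : Fin l → ℂ) :
    ∑ j, Complex.normSq (f j - (∑ k, f k) / (l:ℂ)) ≤ ∑ j, Complex.normSq (f j) := by
  have hl' : (l:ℂ) ≠ 0 := Nat.cast_ne_zero.mpr hl.ne'
  set c : ℂ := (∑ k, f k) / (l:ℂ) with hc
  have hS : ∑ k, f k = (l:ℂ) * c := by rw [hc]; field_simp
  have e : ∀ j : Fin l, Complex.normSq (f j - c)
      = Complex.normSq (f j) - 2*((f j) * (starRingEnd ℂ) c).re + Complex.normSq c :=
    fun j => by rw [Complex.normSq_sub]; ring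
  calc ∑ j, Complex.normSq (f j - c)
      = ∑ j, (Complex.normSq (f j) - 2*((f j) * (starRingEnd ℂ) c).re + Complex.normSq c) := by
        simp_rw [e]
    _ = (∑ j, Complex.normSq (f j)) - 2*((∑ j, f j) * (starRingEnd ℂ) c).re
          + (l:ℝ)*Complex.normSq c := by
        rw [Finset.sum_add_distrib, Finset.sum_sub_distrib, Finset.sum_const,
          Finset.card_univ, Fintype.card_fin, nsmul_eq_mul]
        congr 1
        rw [Finset.sum_mul, Complex.re_sum, ← Finset.mul_sum]
    _ ≤ ∑ j, Complex.normSq (f j) := by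
        rw [hS]
        have h1 : (((l:ℂ) * c) * (starRingEnd ℂ) c).re = (l:ℝ) * Complex.normSq c := by
          rw [mul_assoc, Complex.mul_conj]
          simp
        rw [h1]
        have : 0 ≤ Complex.normSq c := Complex.normSq_nonneg c
        have hlr : (0:ℝ) ≤ l := Nat.cast_nonneg l
        nlinarith

lemma frobR_center_le (hl : 0 < l) (M : Matrix (Fin n) (Fin l) ℝ) :
    frobR (centerR M) ≤ frobR M := by
  apply Real.sqrt_le_sqrt
  rw [traceR, traceR]
  apply Finset.sum_le_sum
  intro i _
  exact row_aux_R hl (fun j => M i j)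

lemma frobC_center_le (hl : 0 < l) (M : Matrix (Fin n) (Fin l) ℂ) :
    frobC (centerC M) ≤ frobC M := by
  apply Real.sqrt_le_sqrt
  rw [traceC, traceC]
  apply Finset.sum_le_sum
  intro i _
  exact row_aux_C hl (fun j => M i j)

lemma centerR_transform (hl : 0 < l) (P : Matrix (Fin n) (Fin n) ℝ) (q : Fin n → ℝ)
    (A B : Matrix (Fin n) (Fin l) ℝ) :
    centerR (P * A + colMatR q - B) = P * centerR A - centerR B := by
  have hl' : (l:ℝ) ≠ 0 := Nat.cast_ne_zero.mpr hl.ne'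
  ext i j
  simp only [centerR, colMatR, Matrix.sub_apply, Matrix.add_apply, Matrix.mul_apply,
    Matrix.of_apply]
  rw [Finset.sum_sub_distrib, Finset.sum_add_distrib, Finset.sum_const, Finset.card_univ,
    Fintype.card_fin, nsmul_eq_mul]
  have h2 : ∑ k : Fin l, ∑ t, P i t * A t k = ∑ t, P i t * (∑ k, A t k) := by
    rw [Finset.sum_comm]
    simp_rw [← Finset.mul_sum]
  rw [h2]
  simp_rw [mul_sub]
  rw [Finset.sum_sub_distrib]
  simp_rw [← mul_div_assoc]
  rw [← Finset.sum_div]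
  field_simp
  ring
lemma centerC_transform (hl : 0 < l) (P : Matrix (Fin n) (Fin n) ℂ) (q : Fin n → ℂ)
    (A B : Matrix (Fin n) (Fin l) ℂ) :
    centerC (P * A + colMatC q - B) = P * centerC A - centerC B := by
  have hl' : (l:ℂ) ≠ 0 := Nat.cast_ne_zero.mpr hl.ne'
  ext i j
  simp only [centerC, colMatC, Matrix.sub_apply, Matrix.add_apply, Matrix.mul_apply,
    Matrix.of_apply]
  rw [Finset.sum_sub_distrib, Finset.sum_add_distrib, Finset.sum_const, Finset.card_univ,
    Fintype.card_fin, nsmul_eq_mul]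
  have h2 : ∑ k : Fin l, ∑ t, P i t * A t k = ∑ t, P i t * (∑ k, A t k) := by
    rw [Finset.sum_comm]
    simp_rw [← Finset.mul_sum]
  rw [h2]
  simp_rw [mul_sub]
  rw [Finset.sum_sub_distrib]
  simp_rw [← mul_div_assoc]
  rw [← Finset.sum_div]
  field_simp
  ring

lemma frobR_nonneg (A : Matrix (Fin n) (Fin l) ℝ) : 0 ≤ frobR A := Real.sqrt_nonneg _
lemma frobC_nonneg (A : Matrix (Fin n) (Fin l) ℂ) : 0 ≤ frobC A := Real.sqrt_nonneg _

lemma key_eq_R (hl : 0 < l) (W : Matrix (Fin n) (Fin n) ℝ) (A B : Matrix (Fin n) (Fin l) ℝ) :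
    ∃ q : Fin n → ℝ, W * centerR A - centerR B = W * A + colMatR q - B := by
  refine ⟨fun i => -((∑ k, (W * A - B) i k) / (l:ℝ)), ?_⟩
  have h := centerR_transform (n := n) hl W 0 A B
  rw [show colMatR (0 : Fin n → ℝ) = (0 : Matrix (Fin n) (Fin l) ℝ) by ext i j; simp [colMatR],
    add_zero] at h
  rw [← h, centerR_eq (W * A - B)]
  have : colMatR (n := n) (l := l) (fun i => -((∑ k, (W * A - B) i k) / (l:ℝ)))
      = -(colMatR (fun i => ((∑ k, (W * A - B) i k) / (l:ℝ)))) := by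
    ext i j; simp [colMatR]
  rw [this]
  abel

lemma key_eq_C (hl : 0 < l) (W : Matrix (Fin n) (Fin n) ℂ) (A B : Matrix (Fin n) (Fin l) ℂ) :
    ∃ q : Fin n → ℂ, W * centerC A - centerC B = W * A + colMatC q - B := by
  refine ⟨fun i => -((∑ k, (W * A - B) i k) / (l:ℂ)), ?_⟩
  have h := centerC_transform (n := n) hl W 0 A B
  rw [show colMatC (0 : Fin n → ℂ) = (0 : Matrix (Fin n) (Fin l) ℂ) by ext i j; simp [colMatC],
    add_zero] at h
  rw [← h, centerC_eq (W * A - B)]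
  have : colMatC (n := n) (l := l) (fun i => -((∑ k, (W * A - B) i k) / (l:ℂ)))
      = -(colMatC (fun i => ((∑ k, (W * A - B) i k) / (l:ℂ)))) := by
    ext i j; simp [colMatC]
  rw [this]
  abel

theorem stmt14' (n l : ℕ) (hn : 0 < n) (hl : 0 < l) :
    (∀ A B : Matrix (Fin n) (Fin l) ℂ, dF A B = dU (centerC A) (centerC B)) ∧
      (∀ A B : Matrix (Fin n) (Fin l) ℝ, dE A B = dO (centerR A) (centerR B)) := by
  constructor
  · intro A B
    unfold dF dU
    have hbdT : BddBelow {x | ∃ W ∈ Matrix.unitaryGroup (Fin n) ℂ,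
        x = frobC (W * centerC A - centerC B)} := by
      refine ⟨0, ?_⟩
      rintro x ⟨W, hW, rfl⟩
      exact frobC_nonneg _
    have hbdS : BddBelow {x | ∃ P ∈ Matrix.unitaryGroup (Fin n) ℂ, ∃ q : Fin n → ℂ,
        x = frobC (P * A + colMatC q - B)} := by
      refine ⟨0, ?_⟩
      rintro x ⟨P, hP, q, rfl⟩
      exact frobC_nonneg _
    apply le_antisymm
    · apply csInf_le_csInf hbdS
      · exact ⟨_, 1, one_mem _, rfl⟩
      · rintro x ⟨W, hW, rfl⟩
        obtain ⟨q, hq⟩ := key_eq_C hl W A B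
        exact ⟨W, hW, q, by rw [← hq]⟩
    · refine le_csInf ⟨frobC ((1:Matrix (Fin n) (Fin n) ℂ) * A + colMatC (fun _ => 0) - B),
        1, one_mem _, fun _ => 0, rfl⟩ ?_
      rintro x ⟨P, hP, q, rfl⟩
      calc sInf {x | ∃ W ∈ Matrix.unitaryGroup (Fin n) ℂ,
            x = frobC (W * centerC A - centerC B)}
          ≤ frobC (P * centerC A - centerC B) := csInf_le hbdT ⟨P, hP, rfl⟩
        _ = frobC (centerC (P * A + colMatC q - B)) := by rw [centerC_transform hl]
        _ ≤ frobC (P * A + colMatC q - B) := frobC_center_le hl _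
  · intro A B
    unfold dE dO
    have hbdT : BddBelow {x | ∃ W ∈ Matrix.orthogonalGroup (Fin n) ℝ,
        x = frobR (W * centerR A - centerR B)} := by
      refine ⟨0, ?_⟩
      rintro x ⟨W, hW, rfl⟩
      exact frobR_nonneg _
    have hbdS : BddBelow {x | ∃ P ∈ Matrix.orthogonalGroup (Fin n) ℝ, ∃ q : Fin n → ℝ,
        x = frobR (P * A + colMatR q - B)} := by
      refine ⟨0, ?_⟩
      rintro x ⟨P, hP, q, rfl⟩
      exact frobR_nonneg _
    apply le_antisymm
    · apply csInf_le_csInf hbdS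
      · exact ⟨_, 1, one_mem _, rfl⟩
      · rintro x ⟨W, hW, rfl⟩
        obtain ⟨q, hq⟩ := key_eq_R hl W A B
        exact ⟨W, hW, q, by rw [← hq]⟩
    · refine le_csInf ⟨frobR ((1:Matrix (Fin n) (Fin n) ℝ) * A + colMatR (fun _ => 0) - B),
        1, one_mem _, fun _ => 0, rfl⟩ ?_
      rintro x ⟨P, hP, q, rfl⟩
      calc sInf {x | ∃ W ∈ Matrix.orthogonalGroup (Fin n) ℝ,
            x = frobR (W * centerR A - centerR B)}
          ≤ frobR (P * centerR A - centerR B) := csInf_le hbdT ⟨P, hP, rfl⟩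
        _ = frobR (centerR (P * A + colMatR q - B)) := by rw [centerR_transform hl]
        _ ≤ frobR (P * A + colMatR q - B) := frobR_center_le hl _

/-- Lemma 10: `d_{F(n)}(A,B) = d_{U(n)}(π_ℂ(A), π_ℂ(B))` for complex matrices, and
`d_{E(n)}(A,B) = d_{O(n)}(π(A), π(B))` for real matrices. -/
theorem stmt14 (n l : ℕ) (hn : 0 < n) (hl : 0 < l) :
    (∀ A B : Matrix (Fin n) (Fin l) ℂ, dF A B = dU (centerC A) (centerC B)) ∧
      (∀ A B : Matrix (Fin n) (Fin l) ℝ, dE A B = dO (centerR A) (centerR B)) := by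
  exact stmt14' n l hn hl
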